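/- With the truncated approximation Q of A, the spectral norm of I − A^{1/2} Q⁻¹ A^{1/2} equals 1 − σ_n/σ_{N+1}; in particular the matrix A^{1/2} Q⁻¹ A^{1/2} has eigenvalues 1 (with multiplicity at least N+1) and σ_i/σ_{N+1} for i = N+1, …, n, all lying in the interval [σ_n/σ_{N+1}, 1]. -/

import Mathlib

open Matrix

namespace Stmt4Aux
variable {n : ℕ}

lemma UUt (u : Fin n → Fin n → ℝ)
    (hortho : ∀ i j : Fin n, u i ⬝ᵥ u j = if i = j then (1 : ℝ) else 0) :
    Matrix.of u * (Matrix.of u)ᵀ = 1 := by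
  ext i j
  simpa [Matrix.mul_apply, Matrix.one_apply, dotProduct] using hortho i j

lemma diag_of_eig (u : Fin n → Fin n → ℝ)
    (hortho : ∀ i j : Fin n, u i ⬝ᵥ u j = if i = j then (1 : ℝ) else 0)
    (B : Matrix (Fin n) (Fin n) ℝ) (c : Fin n → ℝ)
    (hB : ∀ i, B *ᵥ u i = c i • u i) :
    B = (Matrix.of u)ᵀ * Matrix.diagonal c * Matrix.of u := by
  have h1 := UUt u hortho
  have h2 : (Matrix.of u)ᵀ * Matrix.of u = 1 := mul_eq_one_comm.mp h1
  have h3 : B * (Matrix.of u)ᵀ = (Matrix.of u)ᵀ * Matrix.diagonal c := by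
    ext i j
    have hbij := congrFun (hB j) i
    simp only [Matrix.mulVec, dotProduct, Pi.smul_apply, smul_eq_mul] at hbij
    rw [Matrix.mul_apply, Matrix.mul_diagonal, Matrix.transpose_apply]
    calc ∑ x, B i x * (Matrix.of u)ᵀ x j = ∑ x, B i x * u j x := rfl
      _ = c j * u j i := hbij
      _ = u j i * c j := mul_comm _ _
  calc B = B * ((Matrix.of u)ᵀ * Matrix.of u) := by rw [h2, mul_one]
    _ = (B * (Matrix.of u)ᵀ) * Matrix.of u := by rw [mul_assoc]
    _ = (Matrix.of u)ᵀ * Matrix.diagonal c * Matrix.of u := by rw [h3]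

lemma eig_of_diag (u : Fin n → Fin n → ℝ)
    (hortho : ∀ i j : Fin n, u i ⬝ᵥ u j = if i = j then (1 : ℝ) else 0)
    (c : Fin n → ℝ) (i : Fin n) :
    ((Matrix.of u)ᵀ * Matrix.diagonal c * Matrix.of u) *ᵥ u i = c i • u i := by
  have h1 : (Matrix.of u) *ᵥ u i = Pi.single i (1 : ℝ) := by
    funext j
    have := hortho j i
    simp [Matrix.mulVec, dotProduct] at this ⊢
    rw [this]
    by_cases h : j = i <;> simp [h, Pi.single_apply]
  rw [← Matrix.mulVec_mulVec, ← Matrix.mulVec_mulVec, h1]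
  funext j
  simp [Matrix.mulVec, dotProduct, Matrix.mul_apply, Pi.single_apply,
    Finset.mul_sum, Matrix.diagonal_apply, mul_comm]

lemma dot_of_orth (V : Matrix (Fin n) (Fin n) ℝ) (h : Vᵀ * V = 1) (x : Fin n → ℝ) :
    (V *ᵥ x) ⬝ᵥ (V *ᵥ x) = x ⬝ᵥ x := by
  have h1 : V *ᵥ x = x ᵥ* Vᵀ := by rw [Matrix.vecMul_transpose]
  rw [Matrix.dotProduct_mulVec, h1, Matrix.vecMul_vecMul, h, Matrix.vecMul_one]

end Stmt4Aux

namespace Stmt4Aux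

lemma conj_mul {n : ℕ} (V A B : Matrix (Fin n) (Fin n) ℝ) (h : V * Vᵀ = 1) :
    (Vᵀ * A * V) * (Vᵀ * B * V) = Vᵀ * (A * B) * V := by
  have h' : ∀ X : Matrix (Fin n) (Fin n) ℝ, V * (Vᵀ * X) = X := fun X => by
    rw [← mul_assoc, h, one_mul]
  simp only [mul_assoc, h']

lemma sqrt_eig {n : ℕ} (S : Matrix (Fin n) (Fin n) ℝ) (hS : S.PosDef)
    (v : Fin n → ℝ) (s : ℝ) (hs : 0 < s) (h : S *ᵥ (S *ᵥ v) = s • v) :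
    S *ᵥ v = Real.sqrt s • v := by
  set c := Real.sqrt s with hc
  have hc2 : c * c = s := Real.mul_self_sqrt hs.le
  have hcpos : 0 < c := Real.sqrt_pos.mpr hs
  set x := S *ᵥ v - c • v with hx
  have hTx : S *ᵥ x + c • x = 0 := by
    have e1 : S *ᵥ x = s • v - c • (S *ᵥ v) := by
      rw [hx, Matrix.mulVec_sub, Matrix.mulVec_smul, h]
    have e2 : c • x = c • (S *ᵥ v) - s • v := by
      rw [hx, smul_sub, smul_smul, hc2]
    rw [e1, e2]; abel
  have hx0 : x = 0 := by
    by_contra hne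
    have h1 : 0 < x ⬝ᵥ (S *ᵥ x) := by
      have := hS.dotProduct_mulVec_pos hne
      simpa using this
    have h2 : 0 < x ⬝ᵥ x := by
      have hnn : 0 ≤ x ⬝ᵥ x :=
        Finset.sum_nonneg fun i _ => mul_self_nonneg (x i)
      rcases lt_or_eq_of_le hnn with h | h
      · exact h
      · exact absurd (dotProduct_self_eq_zero.mp h.symm) hne
    have h3 : x ⬝ᵥ (S *ᵥ x + c • x) = 0 := by rw [hTx]; simp
    rw [dotProduct_add, dotProduct_smul, smul_eq_mul] at h3
    nlinarith
  have := sub_eq_zero.mp hx0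
  rw [this]

end Stmt4Aux


/-- With the truncated approximation `Q` of `A`, the spectral
norm of `I − A^{1/2} Q⁻¹ A^{1/2}` equals `1 − σ_n/σ_{N+1}` (expressed as: the
Euclidean operator bound holds for every vector and is attained on some nonzero
vector); in particular `A^{1/2} Q⁻¹ A^{1/2}` has the `u_i` as eigenvectors with
eigenvalue `1` for `i ≤ N` (0-based: `i < N`, and also `i = N`) and `σ_i/σ_{N+1}`
otherwise, all lying in `[σ_n/σ_{N+1}, 1]`.  `S` denotes the positive definite
square root of `A`. -/
theorem stmt4 {n N : ℕ} (hN : 1 ≤ N) (hNn : N < n)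
    (A Q : Matrix (Fin n) (Fin n) ℝ) (hA : A.PosDef)
    (σ : Fin n → ℝ) (u : Fin n → Fin n → ℝ)
    (hσpos : ∀ i, 0 < σ i)
    (hσmono : ∀ i j : Fin n, i ≤ j → σ j ≤ σ i)
    (hortho : ∀ i j : Fin n, u i ⬝ᵥ u j = if i = j then (1 : ℝ) else 0)
    (hAeig : ∀ i, A *ᵥ u i = σ i • u i)
    (hQsymm : Q.IsSymm)
    (hQeig : ∀ i : Fin n, Q *ᵥ u i = (if (i : ℕ) < N then σ i else σ ⟨N, hNn⟩) • u i)
    (S : Matrix (Fin n) (Fin n) ℝ) (hS : S.PosDef) (hSS : S * S = A) :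
    (∀ v : Fin n → ℝ,
      Real.sqrt (((1 - S * Q⁻¹ * S) *ᵥ v) ⬝ᵥ ((1 - S * Q⁻¹ * S) *ᵥ v))
        ≤ (1 - σ ⟨n - 1, by omega⟩ / σ ⟨N, hNn⟩) * Real.sqrt (v ⬝ᵥ v)) ∧
    (∃ v : Fin n → ℝ, v ≠ 0 ∧
      Real.sqrt (((1 - S * Q⁻¹ * S) *ᵥ v) ⬝ᵥ ((1 - S * Q⁻¹ * S) *ᵥ v))
        = (1 - σ ⟨n - 1, by omega⟩ / σ ⟨N, hNn⟩) * Real.sqrt (v ⬝ᵥ v)) ∧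
    (∀ i : Fin n, (S * Q⁻¹ * S) *ᵥ u i
        = (if (i : ℕ) < N then (1 : ℝ) else σ i / σ ⟨N, hNn⟩) • u i) ∧
    (∀ i : Fin n, (if (i : ℕ) < N then (1 : ℝ) else σ i / σ ⟨N, hNn⟩)
        ∈ Set.Icc (σ ⟨n - 1, by omega⟩ / σ ⟨N, hNn⟩) 1) := by
  classical
  set K : Fin n := ⟨N, hNn⟩ with hK
  have hLlt : n - 1 < n := by omega
  set L : Fin n := ⟨n - 1, hLlt⟩ with hLdef
  set lam : Fin n → ℝ := fun i => if (i : ℕ) < N then σ i else σ K with hlam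
  set d : Fin n → ℝ := fun i => if (i : ℕ) < N then (1 : ℝ) else σ i / σ K with hd
  set μ : Fin n → ℝ := fun i => 1 - d i with hμ
  have hσKpos : 0 < σ K := hσpos K
  have hKL : K ≤ L := by
    simp only [hK, hLdef, Fin.le_def]; omega
  have hdmem : ∀ i : Fin n, d i ∈ Set.Icc (σ L / σ K) 1 := by
    intro i
    have hiL : i ≤ L := by
      simp only [hLdef, Fin.le_def]; omega
    have hLi : σ L ≤ σ i := hσmono i L hiL
    have hLK : σ L ≤ σ K := hσmono K L hKL
    constructor
    · by_cases h : (i : ℕ) < N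
      · simp only [hd, h, if_true]
        exact div_le_one_of_le₀ hLK hσKpos.le
      · simp only [hd, h, if_false]
        gcongr
    · by_cases h : (i : ℕ) < N
      · simp [hd, h]
      · simp only [hd, h, if_false]
        have hiK : σ i ≤ σ K := by
          apply hσmono K i
          simp only [hK, Fin.le_def]; omega
        exact div_le_one_of_le₀ hiK hσKpos.le
  set U : Matrix (Fin n) (Fin n) ℝ := Matrix.of u with hU
  have hUUt : U * Uᵀ = 1 := Stmt4Aux.UUt u hortho
  have hUtU : Uᵀ * U = 1 := mul_eq_one_comm.mp hUUt
  have hSeig : ∀ i, S *ᵥ u i = Real.sqrt (σ i) • u i := by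
    intro i
    apply Stmt4Aux.sqrt_eig S hS (u i) (σ i) (hσpos i)
    rw [Matrix.mulVec_mulVec, hSS, hAeig]
  have hSdiag : S = Uᵀ * Matrix.diagonal (fun i => Real.sqrt (σ i)) * U :=
    Stmt4Aux.diag_of_eig u hortho S _ hSeig
  have hQdiag : Q = Uᵀ * Matrix.diagonal lam * U :=
    Stmt4Aux.diag_of_eig u hortho Q lam hQeig
  have hlampos : ∀ i, 0 < lam i := by
    intro i
    by_cases h : (i : ℕ) < N <;> simp [hlam, h, hσpos i, hσKpos]
  have hQinv : Q⁻¹ = Uᵀ * Matrix.diagonal (fun i => (lam i)⁻¹) * U := by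
    apply Matrix.inv_eq_right_inv
    rw [hQdiag, Stmt4Aux.conj_mul _ _ _ hUUt, Matrix.diagonal_mul_diagonal]
    have : (fun i => lam i * (lam i)⁻¹) = fun _ => (1 : ℝ) := by
      funext i; exact mul_inv_cancel₀ (hlampos i).ne'
    rw [this, Matrix.diagonal_one, mul_one, hUtU]
  have hSQS : S * Q⁻¹ * S = Uᵀ * Matrix.diagonal d * U := by
    rw [hSdiag, hQinv, Stmt4Aux.conj_mul _ _ _ hUUt, Stmt4Aux.conj_mul _ _ _ hUUt,
      Matrix.diagonal_mul_diagonal, Matrix.diagonal_mul_diagonal]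
    have hfun : (fun i => Real.sqrt (σ i) * ((lam i)⁻¹ * Real.sqrt (σ i))) = d := by
      funext i
      have hcc : Real.sqrt (σ i) * Real.sqrt (σ i) = σ i := Real.mul_self_sqrt (hσpos i).le
      by_cases h : (i : ℕ) < N
      · have hli : lam i = σ i := by simp [hlam, h]
        have : Real.sqrt (σ i) * ((σ i)⁻¹ * Real.sqrt (σ i))
            = Real.sqrt (σ i) * Real.sqrt (σ i) * (σ i)⁻¹ := by ring
        simp only [hd, h, if_true, hli, this, hcc]
        exact mul_inv_cancel₀ (hσpos i).ne'
      · have hli : lam i = σ K := by simp [hlam, h]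
        have : Real.sqrt (σ i) * ((σ K)⁻¹ * Real.sqrt (σ i))
            = Real.sqrt (σ i) * Real.sqrt (σ i) * (σ K)⁻¹ := by ring
        simp only [hd, h, if_false, hli, this, hcc]
        rw [← div_eq_mul_inv]
    have hassoc : (fun i => Real.sqrt (σ i) * (lam i)⁻¹ * Real.sqrt (σ i))
        = (fun i => Real.sqrt (σ i) * ((lam i)⁻¹ * Real.sqrt (σ i))) := by
      funext i; ring
    rw [hassoc, hfun]
  have hMdiag : (1 : Matrix (Fin n) (Fin n) ℝ) - S * Q⁻¹ * S = Uᵀ * Matrix.diagonal μ * U := by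
    have h1 : (1 : Matrix (Fin n) (Fin n) ℝ) = Uᵀ * Matrix.diagonal (fun _ => (1 : ℝ)) * U := by
      rw [Matrix.diagonal_one, mul_one, hUtU]
    rw [hSQS]
    nth_rewrite 1 [h1]
    rw [← Matrix.sub_mul, ← Matrix.mul_sub, ← Matrix.diagonal_sub]
  set m : ℝ := 1 - σ L / σ K with hm
  have hm0 : 0 ≤ m := by
    have := div_le_one_of_le₀ (hσmono K L hKL) hσKpos.le
    simp only [hm]; linarith
  have hμb : ∀ i, 0 ≤ μ i ∧ μ i ≤ m := by
    intro i
    obtain ⟨ha, hb⟩ := hdmem i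
    constructor
    · simp only [hμ]; linarith
    · simp only [hμ, hm]; linarith
  refine ⟨fun v => ?_, ⟨u L, ?_, ?_⟩, fun i => ?_, fun i => ?_⟩
  · -- part 1
    show Real.sqrt (((1 - S * Q⁻¹ * S) *ᵥ v) ⬝ᵥ ((1 - S * Q⁻¹ * S) *ᵥ v))
        ≤ m * Real.sqrt (v ⬝ᵥ v)
    set w := U *ᵥ v with hw
    have hMv : (1 - S * Q⁻¹ * S) *ᵥ v = Uᵀ *ᵥ (Matrix.diagonal μ *ᵥ w) := by
      rw [hMdiag, ← Matrix.mulVec_mulVec, ← Matrix.mulVec_mulVec]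
    have hUtorth : (Uᵀ)ᵀ * Uᵀ = 1 := by rw [Matrix.transpose_transpose]; exact hUUt
    have hnormsq : ((1 - S * Q⁻¹ * S) *ᵥ v) ⬝ᵥ ((1 - S * Q⁻¹ * S) *ᵥ v)
        = (Matrix.diagonal μ *ᵥ w) ⬝ᵥ (Matrix.diagonal μ *ᵥ w) := by
      rw [hMv]; exact Stmt4Aux.dot_of_orth Uᵀ hUtorth _
    have hwv : w ⬝ᵥ w = v ⬝ᵥ v := Stmt4Aux.dot_of_orth U hUtU v
    have hsum : (Matrix.diagonal μ *ᵥ w) ⬝ᵥ (Matrix.diagonal μ *ᵥ w) ≤ m ^ 2 * (w ⬝ᵥ w) := by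
      simp only [dotProduct, Matrix.mulVec_diagonal, Finset.mul_sum]
      apply Finset.sum_le_sum
      intro i _
      obtain ⟨h0, h1⟩ := hμb i
      have hμ2 : μ i * μ i ≤ m * m := mul_le_mul h1 h1 h0 hm0
      have hkey := mul_le_mul_of_nonneg_right hμ2 (mul_self_nonneg (w i))
      calc μ i * w i * (μ i * w i) = μ i * μ i * (w i * w i) := by ring
        _ ≤ m * m * (w i * w i) := hkey
        _ = m ^ 2 * (w i * w i) := by ring
    calc Real.sqrt (((1 - S * Q⁻¹ * S) *ᵥ v) ⬝ᵥ ((1 - S * Q⁻¹ * S) *ᵥ v))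
        = Real.sqrt ((Matrix.diagonal μ *ᵥ w) ⬝ᵥ (Matrix.diagonal μ *ᵥ w)) := by rw [hnormsq]
      _ ≤ Real.sqrt (m ^ 2 * (v ⬝ᵥ v)) := Real.sqrt_le_sqrt (by rw [← hwv]; exact hsum)
      _ = m * Real.sqrt (v ⬝ᵥ v) := by
          rw [Real.sqrt_mul (sq_nonneg m), Real.sqrt_sq hm0]
  · -- nonzero
    intro h0
    have := hortho L L
    rw [h0] at this
    simp at this
  · -- attainment
    show Real.sqrt (((1 - S * Q⁻¹ * S) *ᵥ u L) ⬝ᵥ ((1 - S * Q⁻¹ * S) *ᵥ u L))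
        = m * Real.sqrt (u L ⬝ᵥ u L)
    have hdL : d L = σ L / σ K := by
      have : ¬ ((L : ℕ) < N) := by simp only [hLdef]; omega
      simp [hd, this]
    have hμL : μ L = m := by simp only [hμ, hm, hdL]
    have hML : (1 - S * Q⁻¹ * S) *ᵥ u L = m • u L := by
      rw [hMdiag, ← hμL]
      exact Stmt4Aux.eig_of_diag u hortho μ L
    rw [hML, smul_dotProduct, dotProduct_smul, smul_eq_mul, smul_eq_mul, ← mul_assoc,
      show m * m = m ^ 2 by ring, Real.sqrt_mul (sq_nonneg m), Real.sqrt_sq hm0]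
  · -- eigenvectors
    show (S * Q⁻¹ * S) *ᵥ u i = d i • u i
    rw [hSQS]
    exact Stmt4Aux.eig_of_diag u hortho d i
  · -- interval
    exact hdmem i
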